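/- The Thue–Morse-based coloring of ℤ is non-repetitive with 3 colors; consequently π(P) ≤ 3 for the infinite path P. -/

import Mathlib

/-- A coloring `f` of the vertices of `G` is *non-repetitive* if no path
(walk with distinct vertices) has a color sequence of the form `w ++ w`
with `w` nonempty. -/
def NonRepetitive {V α : Type*} (G : SimpleGraph V) (f : V → α) : Prop :=
  ∀ ⦃u v : V⦄ (p : G.Walk u v), p.IsPath →
    ∀ w : List α, w ≠ [] → p.support.map f ≠ w ++ w

/-- The infinite path: the graph on `ℤ` with `i ~ j` iff `|i - j| = 1`. -/
def infPath : SimpleGraph ℤ :=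
  SimpleGraph.fromRel (fun i j => i - j = 1)


def tm (n : ℕ) : Bool := decide ((Nat.digits 2 n).sum % 2 = 1)

lemma tm_two_mul (n : ℕ) : tm (2 * n) = tm n := by
  rcases Nat.eq_zero_or_pos n with h | h
  · simp [h]
  · unfold tm
    rw [Nat.digits_def' (by norm_num) (by omega)]
    simp [Nat.mul_div_cancel_left, Nat.mul_mod_right]

lemma tm_two_mul_add_one (n : ℕ) : tm (2 * n + 1) = !tm n := by
  unfold tm
  rw [Nat.digits_def' (by norm_num) (by omega)]
  have h1 : (2 * n + 1) % 2 = 1 := by omega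
  have h2 : (2 * n + 1) / 2 = n := by omega
  rw [h1, h2]
  simp only [List.sum_cons]
  rcases Nat.mod_two_eq_zero_or_one (Nat.digits 2 n).sum with h | h <;> simp [Nat.add_mod, h]

lemma tm_add_pow : ∀ (e : ℕ), ∀ x < 2 ^ e, tm (x + 2 ^ e) = !tm x := by
  intro e
  induction e with
  | zero =>
    intro x hx
    interval_cases x
    norm_num [tm]
  | succ e ih =>
    intro x hx
    rcases Nat.even_or_odd x with ⟨y, hy⟩ | ⟨y, hy⟩
    · have hy2 : x = 2 * y := by omega
      have hy' : y < 2 ^ e := by omega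
      have h3 : x + 2 ^ (e + 1) = 2 * (y + 2 ^ e) := by rw [pow_succ]; omega
      rw [h3, tm_two_mul, ih y hy', hy2, tm_two_mul]
    · have hy' : y < 2 ^ e := by omega
      have h3 : x + 2 ^ (e + 1) = 2 * (y + 2 ^ e) + 1 := by rw [pow_succ]; omega
      rw [h3, tm_two_mul_add_one, ih y hy', hy, tm_two_mul_add_one, Bool.not_not]



lemma tm_ne (n : ℕ) : tm (2 * n) ≠ tm (2 * n + 1) := by
  rw [tm_two_mul, tm_two_mul_add_one]
  cases tm n <;> simp

lemma odd_of_tm_eq {m : ℕ} (h : tm m = tm (m + 1)) : m % 2 = 1 := by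
  rcases Nat.even_or_odd m with ⟨c, hc⟩ | ⟨c, hc⟩
  · exfalso
    have hc2 : m = 2 * c := by omega
    exact tm_ne c (by rw [← hc2, ← hc2 ] at *; rw [h])
  · omega

lemma tm_no_overlap : ∀ (k : ℕ), 1 ≤ k → ∀ n : ℕ, ¬ (∀ j ≤ k, tm (n + j) = tm (n + j + k)) := by
  intro k
  induction k using Nat.strong_induction_on with
  | _ k ih =>
  intro hk n H
  rcases Nat.even_or_odd k with ⟨m, hm⟩ | ⟨l, hl⟩
  · -- k = 2m even
    have hm2 : k = 2 * m := by omega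
    have hm1 : 1 ≤ m := by omega
    apply ih m (by omega) hm1 (n / 2)
    intro j hj
    have h2j := H (2 * j) (by omega)
    rcases Nat.even_or_odd n with ⟨c, hc⟩ | ⟨c, hc⟩
    · have hc2 : n = 2 * c := by omega
      have e1 : n + 2 * j = 2 * (c + j) := by omega
      have e2 : n + 2 * j + k = 2 * (c + j + m) := by omega
      have e3 : n / 2 = c := by omega
      rw [e2, e1, tm_two_mul, tm_two_mul] at h2j
      rw [e3]
      exact h2j
    · have hc2 : n = 2 * c + 1 := by omega
      have e1 : n + 2 * j = 2 * (c + j) + 1 := by omega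
      have e2 : n + 2 * j + k = 2 * (c + j + m) + 1 := by omega
      have e3 : n / 2 = c := by omega
      rw [e2, e1, tm_two_mul_add_one, tm_two_mul_add_one] at h2j
      rw [e3]
      exact Bool.not_inj h2j
  · -- k = 2l + 1 odd
    have hl2 : k = 2 * l + 1 := by omega
    rcases Nat.eq_or_lt_of_le hk with h1 | h3
    · -- k = 1
      have hk1 : k = 1 := h1.symm
      subst hk1
      have e0 := H 0 (by omega)
      have e1 := H 1 (by omega)
      simp only [Nat.add_zero] at e0
      rcases Nat.even_or_odd n with ⟨c, hc⟩ | ⟨c, hc⟩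
      · have hc2 : n = 2 * c := by omega
        exact tm_ne c (by rw [← hc2]; exact e0)
      · have hc2 : n + 1 = 2 * (c + 1) := by omega
        apply tm_ne (c + 1)
        rw [← hc2]
        exact e1
    · -- k ≥ 3 odd
      have hl1 : 1 ≤ l := by omega
      -- key derivation for suitable a
      have key : ∀ a : ℕ, n ≤ 2 * a → 2 * a + 2 ≤ n + k →
          tm a = tm (a + 1) ∧ tm (a + l) = tm (a + l + 1) := by
        intro a ha1 ha2
        have e1 := H (2 * a - n) (by omega)
        have e2 := H (2 * a - n + 1) (by omega)
        have e3 := H (2 * a - n + 2) (by omega)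
        rw [show n + (2*a - n) + k = 2 * (a + l) + 1 by omega,
            show n + (2*a - n) = 2 * a by omega,
            tm_two_mul, tm_two_mul_add_one] at e1
        rw [show n + (2*a - n + 1) + k = 2 * (a + l + 1) by omega,
            show n + (2*a - n + 1) = 2 * a + 1 by omega,
            tm_two_mul_add_one, tm_two_mul] at e2
        rw [show n + (2*a - n + 2) + k = 2 * (a + l + 1) + 1 by omega,
            show n + (2*a - n + 2) = 2 * (a + 1) by omega,
            tm_two_mul, tm_two_mul_add_one] at e3
        refine ⟨?_, ?_⟩ <;>
          cases htm : tm a <;> cases htl : tm (a + l) <;> simp_all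
      have hkey1 := key ((n + 1) / 2) (by omega) (by omega)
      have ha_odd := odd_of_tm_eq hkey1.1
      have hb_odd := odd_of_tm_eq hkey1.2
      rcases Nat.lt_or_ge k 5 with h5 | h5
      · -- k = 3, l = 1
        omega
      · have hkey2 := key ((n + 1) / 2 + 1) (by omega) (by omega)
        have ha1_odd := odd_of_tm_eq hkey2.1
        omega


def tmZ (n : ℤ) : Bool := tm ((n + (4:ℕ) ^ (n.natAbs + 1)).toNat)

lemma four_pow (m : ℕ) : (4:ℕ) ^ m = 2 ^ (2 * m) := by
  rw [pow_mul]; norm_num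

lemma tmZ_shift (n : ℤ) (m : ℕ) (h : n.natAbs < 4 ^ m) :
    tm ((n + (4:ℕ) ^ m).toNat) = tm ((n + (4:ℕ) ^ (m+1)).toNat) := by
  have h4 : (4:ℕ) ^ m ≤ 4 ^ (m + 1) := Nat.pow_le_pow_right (by norm_num) (by omega)
  have h4' : (4:ℕ) ^ (m+1) = 4 * 4 ^ m := by ring
  rcases le_or_gt 0 n with hn | hn
  · have e1 : (n + (4:ℕ) ^ m).toNat = n.toNat + 4 ^ m := by omega
    have e2 : (n + (4:ℕ) ^ (m+1)).toNat = n.toNat + 4 ^ (m+1) := by omega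
    rw [e1, e2, four_pow, four_pow]
    rw [tm_add_pow (2*m) n.toNat (by rw [← four_pow]; omega)]
    rw [tm_add_pow (2*(m+1)) n.toNat (by rw [← four_pow]; omega)]
  · set y := (n + (4:ℕ) ^ m).toNat with hy
    have hy1 : y < 4 ^ m := by omega
    have e2 : (n + (4:ℕ) ^ (m+1)).toNat = y + 3 * 4 ^ m := by omega
    rw [e2]
    have e3 : y + 3 * 4 ^ m = (y + 2 ^ (2*m)) + 2 ^ (2*m+1) := by
      rw [← four_pow]; ring_nf; rw [four_pow]; ring
    rw [e3]
    rw [tm_add_pow (2*m+1) (y + 2^(2*m)) (by rw [pow_succ]; rw [← four_pow] at *; omega)]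
    rw [tm_add_pow (2*m) y (by rw [← four_pow]; omega)]
    simp

lemma tmZ_eq (n : ℤ) (m : ℕ) (h : n.natAbs < 4 ^ m) :
    tmZ n = tm ((n + (4:ℕ) ^ m).toNat) := by
  have stable : ∀ m₁, n.natAbs < 4 ^ m₁ → ∀ m₂, m₁ ≤ m₂ →
      tm ((n + (4:ℕ) ^ m₁).toNat) = tm ((n + (4:ℕ) ^ m₂).toNat) := by
    intro m₁ h₁ m₂ hle
    induction m₂, hle using Nat.le_induction with
    | base => rfl
    | succ m₂ hle ih =>
      rw [ih, tmZ_shift n m₂ (lt_of_lt_of_le h₁ (Nat.pow_le_pow_right (by norm_num) hle))]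
  have h0 : n.natAbs < 4 ^ (n.natAbs + 1) := by
    calc n.natAbs < 4 ^ n.natAbs := Nat.lt_pow_self (by norm_num)
    _ ≤ 4 ^ (n.natAbs + 1) := Nat.pow_le_pow_right (by norm_num) (by omega)
  unfold tmZ
  rw [stable (n.natAbs + 1) h0 (max (n.natAbs + 1) m) (le_max_left _ _),
      stable m h (max (n.natAbs + 1) m) (le_max_right _ _)]

lemma tmZ_no_overlap (k : ℕ) (hk : 1 ≤ k) (n : ℤ) :
    ¬ (∀ j : ℕ, j ≤ k → tmZ (n + j) = tmZ (n + j + k)) := by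
  intro H
  set m := n.natAbs + 2 * k + 1 with hm
  have hmlt : m < 4 ^ m := Nat.lt_pow_self (by norm_num)
  have key : ∀ x : ℤ, x.natAbs ≤ n.natAbs + 2 * k → x.natAbs < 4 ^ m := by
    intro x hx
    omega
  have hnn : 0 ≤ n + (4:ℕ) ^ m := by
    have := key n (by omega)
    omega
  set N := (n + (4:ℕ) ^ m).toNat with hN
  apply tm_no_overlap k hk N
  intro j hj
  have h1 := tmZ_eq (n + j) m (key _ (by omega))
  have h2 := tmZ_eq (n + j + k) m (key _ (by omega))
  have e1 : (n + (j:ℤ) + (4:ℕ)^m).toNat = N + j := by omega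
  have e2 : (n + (j:ℤ) + (k:ℤ) + (4:ℕ)^m).toNat = N + j + k := by omega
  rw [e1] at h1
  rw [e2] at h2
  rw [← h1, ← h2]
  exact H j hj

def Bz (n : ℤ) : ℤ := if tmZ n then 1 else 0

def fcol (n : ℤ) : Fin 3 :=
  if tmZ n = tmZ (n + 1) then 0 else if tmZ n then 1 else 2

lemma Bz_cases (n : ℤ) : Bz n = 0 ∨ Bz n = 1 := by
  unfold Bz; split <;> simp

lemma tmZ_of_Bz {a b : ℤ} (h : Bz a = Bz b) : tmZ a = tmZ b := by
  unfold Bz at h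
  cases ha : tmZ a <;> cases hb : tmZ b <;> simp_all

lemma fcol_diff {a b : ℤ} (h : fcol a = fcol b) :
    Bz (a + 1) - Bz a = Bz (b + 1) - Bz b := by
  unfold fcol at h
  unfold Bz
  cases h1 : tmZ a <;> cases h2 : tmZ (a+1) <;> cases h3 : tmZ b <;> cases h4 : tmZ (b+1) <;>
    simp_all

lemma no_square (n : ℤ) (k : ℕ) (hk : 1 ≤ k)
    (h : ∀ j : ℕ, j < k → fcol (n + j) = fcol (n + j + k)) : False := by
  have hD : ∀ j : ℕ, j < k →
      Bz (n + j + 1) - Bz (n + j) = Bz (n + j + k + 1) - Bz (n + j + k) :=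
    fun j hj => fcol_diff (h j hj)
  have hC : ∀ j : ℕ, j ≤ k → Bz (n + j) - Bz (n + j + k) = Bz n - Bz (n + k) := by
    intro j hj
    induction j with
    | zero => simp
    | succ j ih =>
      have ihj := ih (by omega)
      have hdj := hD j (by omega)
      have e1 : n + (j+1:ℕ) = n + j + 1 := by push_cast; ring
      have e2 : n + (j+1:ℕ) + k = n + j + k + 1 := by push_cast; ring
      have e3 : n + (j:ℤ) + 1 + k = n + j + k + 1 := by ring
      rw [e1, e3]
      omega
  have hc0 : Bz n = Bz (n + k) := by
    have h1 := hC k le_rfl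
    have b0 := Bz_cases n
    have b1 := Bz_cases (n + k)
    have b2 := Bz_cases (n + k + k)
    omega
  apply tmZ_no_overlap k hk n
  intro j hj
  apply tmZ_of_Bz
  have := hC j hj
  omega

lemma infPath_adj {u v : ℤ} (h : infPath.Adj u v) : v = u + 1 ∨ v = u - 1 := by
  rw [infPath, SimpleGraph.fromRel_adj] at h
  omega

lemma map_range_succ_cons (c s : ℤ) (n : ℕ) :
    (List.range (n + 1)).map (fun i : ℕ => c + s * i) =
      c :: (List.range n).map (fun i : ℕ => c + s + s * i) := by
  rw [List.range_succ_eq_map, List.map_cons, List.map_map]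
  simp only [Nat.cast_zero, mul_zero, add_zero]
  congr 1
  apply List.map_congr_left
  intro i _
  simp only [Function.comp_apply]
  push_cast
  ring

lemma path_support : ∀ {u v : ℤ} (p : infPath.Walk u v), p.IsPath →
    ∃ s : ℤ, (s = 1 ∨ s = -1) ∧
      p.support = (List.range (p.length + 1)).map (fun i : ℕ => u + s * i) := by
  intro u v p
  induction p with
  | nil => intro _; exact ⟨1, Or.inl rfl, by simp [show List.range 1 = [0] from rfl]⟩
  | @cons u u' v h q ih =>
    intro hp
    rw [SimpleGraph.Walk.cons_isPath_iff] at hp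
    obtain ⟨s, hs, hsup⟩ := ih hp.1
    have hstep : u' = u + 1 ∨ u' = u - 1 := infPath_adj h
    by_cases hL : q.length = 0
    · refine ⟨u' - u, by omega, ?_⟩
      have : q.support = [u'] := by
        rw [hsup, hL]
        simp [show List.range 1 = [0] from rfl]
      simp only [SimpleGraph.Walk.support_cons, SimpleGraph.Walk.length_cons, this, hL]
      rw [map_range_succ_cons]
      simp [show List.range 1 = [0] from rfl]
    · -- q.length ≥ 1
      have hL1 : 1 ≤ q.length := by omega
      have hmem : u' + s * ((1:ℕ):ℤ) ∈ q.support := by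
        rw [hsup]
        exact List.mem_map.mpr ⟨1, List.mem_range.mpr (by omega), rfl⟩
      have hne : u' + s ≠ u := by
        intro hcontra
        apply hp.2
        simpa [hcontra] using hmem
      have hss : u' = u + s := by rcases hs with h1 | h1 <;> rcases hstep with h2 | h2 <;> omega
      refine ⟨s, hs, ?_⟩
      simp only [SimpleGraph.Walk.support_cons, SimpleGraph.Walk.length_cons]
      rw [show q.length + 1 + 1 = (q.length + 1) + 1 by rfl, map_range_succ_cons, hsup, ← hss]
/-- There is a non-repetitive `3`-coloring of the infinite path (e.g. the
square-free ternary sequence derived from the Thue–Morse sequence);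
consequently `π(P) ≤ 3`. -/
theorem pi_infPath_le_three :
    ∃ f : ℤ → Fin 3, NonRepetitive infPath f := by
  refine ⟨fcol, ?_⟩
  intro u v p hp w hw hmap
  obtain ⟨s, hs, hsup⟩ := path_support p hp
  obtain ⟨k, hk⟩ : ∃ k, w.length = k := ⟨_, rfl⟩
  have hk1 : 1 ≤ k := by
    rw [← hk]
    exact List.length_pos_iff.mpr hw
  have hlen : p.length + 1 = 2 * k := by
    have hl := congrArg List.length hmap
    simp only [List.length_map, SimpleGraph.Walk.length_support, List.length_append] at hl
    omega
  have hm2 : (List.range (2 * k)).map (fun i : ℕ => fcol (u + s * i)) = w ++ w := by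
    rw [← hmap, hsup, hlen, List.map_map]
    rfl
  have hww : (w ++ w).length = 2 * k := by
    simp only [List.length_append, hk]
    omega
  have hge : ∀ i : ℕ, i < 2 * k → ∀ (hi : i < (w ++ w).length),
      fcol (u + s * i) = (w ++ w)[i] := by
    intro i hi2 hi
    rw [List.getElem_of_eq hm2.symm hi, List.getElem_map, List.getElem_range]
  have hget : ∀ j : ℕ, j < k → fcol (u + s * j) = fcol (u + s * ((k + j : ℕ) : ℤ)) := by
    intro j hj
    have h1 := hge j (by omega) (by omega)
    have h2 := hge (k + j) (by omega) (by omega)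
    rw [h1, h2]
    rw [List.getElem_append_left (by omega : j < w.length),
        List.getElem_append_right (by omega : w.length ≤ k + j)]
    congr 1
    omega
  rcases hs with h1 | h1
  · apply no_square u k hk1
    intro j hj
    have h := hget j hj
    rw [h1] at h
    have e1 : u + 1 * (j:ℤ) = u + j := by ring
    have e2 : u + 1 * ((k + j : ℕ):ℤ) = u + j + k := by push_cast; ring
    rw [e1, e2] at h
    exact h
  · apply no_square (u - 2 * k + 1) k hk1
    intro j hj
    have h := hget (k - 1 - j) (by omega)
    rw [h1] at h
    have c1 : ((k - 1 - j : ℕ) : ℤ) = (k : ℤ) - 1 - j := by omega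
    have e1 : u + (-1) * ((k - 1 - j : ℕ):ℤ) = u - 2 * k + 1 + j + k := by rw [c1]; ring
    have e2 : u + (-1) * ((k + (k - 1 - j) : ℕ):ℤ) = u - 2 * k + 1 + j := by
      have : ((k + (k - 1 - j) : ℕ) : ℤ) = 2 * (k:ℤ) - 1 - j := by omega
      rw [this]; ring
    rw [e1, e2] at h
    exact h.symm
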